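/- Let G=(V,E) be a finite graph with |V| vertices and |E| edges. For integers i,j let a_{ij} be the number of subsets S ⊆ V with |[S,S̄]| = i and |S| = j, and let b_{ij} be the number of T-joins (T,A) of G with |A| = i and |T| = j. Then for all real numbers x and y, 2^{|E|} · Σ_{i,j} a_{ij} x^i y^j = Σ_{i,j} b_{ij} (1−x)^i (1+x)^{|E|−i} (1−y)^j (1+y)^{|V|−j}; equivalently, 2^{|E|} · Σ_{S⊆V} x^{|[S,S̄]|} y^{|S|} = Σ_{(T,A) T-join} (1−x)^{|A|} (1+x)^{|E|−|A|} (1−y)^{|T|} (1+y)^{|V|−|T|}. -/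

import Mathlib

open Finset
open scoped Classical

variable {V : Type*} [Fintype V] [DecidableEq V]

/-- The cut `[S, S̄]`: the set of edges of `G` with one endpoint in `S` and the other
endpoint in `S̄ = V ∖ S`. -/
noncomputable def cutEdges (G : SimpleGraph V) [DecidableRel G.Adj] (S : Finset V) :
    Finset (Sym2 V) :=
  G.edgeFinset.filter fun e => (∃ a ∈ e, a ∈ S) ∧ (∃ a ∈ e, a ∉ S)

/-- A T-join `(T, A)` in `G`: `A ⊆ E`, every vertex of `T` is incident with an odd number
of edges of `A`, and every vertex outside `T` is incident with an even number of edges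
of `A`. -/
def IsTJoin (G : SimpleGraph V) [DecidableRel G.Adj] (T : Finset V)
    (A : Finset (Sym2 V)) : Prop :=
  A ⊆ G.edgeFinset ∧ ∀ v : V, v ∈ T ↔ Odd (A.filter fun e => v ∈ e).card

/-- The product of the spins at the two endpoints of an edge. -/
noncomputable def edgeProd (σ : V → ℤ) (e : Sym2 V) : ℤ :=
  Sym2.lift ⟨fun u w => σ u * σ w, fun _ _ => mul_comm _ _⟩ e

/-- The energy of `G` in state `σ`: `∑_{uv ∈ E} σ(u) σ(v)`. -/
noncomputable def energy (G : SimpleGraph V) [DecidableRel G.Adj] (σ : V → ℤ) : ℤ :=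
  ∑ e ∈ G.edgeFinset, edgeProd σ e

/-- The magnetization of a state: `∑_{v ∈ V} σ(v)`. -/
noncomputable def magnet (σ : V → ℤ) : ℤ := ∑ v : V, σ v

/-- The number of even subgraphs of `G` (edge sets in which every vertex has even degree)
with exactly `i` edges. -/
noncomputable def evenCount (G : SimpleGraph V) [DecidableRel G.Adj] (i : ℕ) : ℕ :=
  (G.edgeFinset.powerset.filter fun A =>
      A.card = i ∧ ∀ v : V, Even (A.filter fun e => v ∈ e).card).card

section Aux

set_option linter.unusedSectionVars false


variable {α : Type*} [DecidableEq α]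

lemma prod_sign (A B : Finset α) :
    (∏ e ∈ A, (if e ∈ B then (-1 : ℝ) else 1)) = (-1) ^ (B ∩ A).card := by
  rw [Finset.prod_ite, Finset.prod_const, Finset.prod_const, one_pow, mul_one,
    Finset.filter_mem_eq_inter, Finset.inter_comm]

lemma expand_lemma (s t : Finset α) (h : t ⊆ s) (x : ℝ) :
    (1 - x) ^ t.card * (1 + x) ^ (s.card - t.card)
      = ∑ u ∈ s.powerset, (-1) ^ (t ∩ u).card * x ^ u.card := by
  have key := Finset.prod_add (fun e => (if e ∈ t then (-1 : ℝ) else 1) * x)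
      (fun _ => (1 : ℝ)) s
  have hL : (∏ e ∈ s, ((if e ∈ t then (-1:ℝ) else 1) * x + 1))
      = (1 - x) ^ t.card * (1 + x) ^ (s.card - t.card) := by
    have : ∀ e ∈ s, ((if e ∈ t then (-1:ℝ) else 1) * x + 1)
        = (if e ∈ t then 1 - x else 1 + x) := by
      intro e _; split <;> ring
    rw [Finset.prod_congr rfl this, Finset.prod_ite, Finset.prod_const, Finset.prod_const,
      Finset.filter_mem_eq_inter, Finset.inter_eq_right.mpr h,
      ← Finset.sdiff_eq_filter, Finset.card_sdiff_of_subset h]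
  rw [hL] at key
  rw [key]
  refine Finset.sum_congr rfl fun u hu => ?_
  rw [Finset.prod_const_one, mul_one, Finset.prod_mul_distrib, Finset.prod_const, prod_sign]

lemma charsum (s B C : Finset α) (hB : B ⊆ s) (hC : C ⊆ s) :
    ∑ A ∈ s.powerset, (-1 : ℝ) ^ (B ∩ A).card * (-1) ^ (C ∩ A).card
      = if B = C then 2 ^ s.card else 0 := by
  have key := Finset.prod_add
      (fun e => (if e ∈ B then (-1 : ℝ) else 1) * (if e ∈ C then (-1 : ℝ) else 1))
      (fun _ => (1 : ℝ)) s
  have hR : ∑ A ∈ s.powerset,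
        (∏ e ∈ A, ((if e ∈ B then (-1:ℝ) else 1) * (if e ∈ C then (-1:ℝ) else 1)))
          * ∏ e ∈ s \ A, (1:ℝ)
      = ∑ A ∈ s.powerset, (-1 : ℝ) ^ (B ∩ A).card * (-1) ^ (C ∩ A).card := by
    refine Finset.sum_congr rfl fun A hA => ?_
    rw [Finset.prod_const_one, mul_one, Finset.prod_mul_distrib, prod_sign, prod_sign]
  rw [← hR, ← key]
  split
  · next h =>
    subst h
    rw [Finset.prod_congr rfl (fun e _ => ?_), Finset.prod_const]
    split <;> norm_num
  · next h =>
    obtain ⟨e, he⟩ : ∃ e, ¬ (e ∈ B ↔ e ∈ C) := by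
      by_contra hc
      push_neg at hc
      exact h (Finset.ext fun e => hc e)
    by_cases hb : e ∈ B <;> by_cases hc2 : e ∈ C
    · exact absurd (iff_of_true hb hc2) he
    · refine Finset.prod_eq_zero (hB hb) ?_
      simp [hb, hc2]
    · refine Finset.prod_eq_zero (hC hc2) ?_
      simp [hb, hc2]
    · exact absurd (iff_of_false hb hc2) he

lemma neg_one_pow_congr' {m n : ℕ} (h : Even m ↔ Even n) : (-1 : ℝ) ^ m = (-1) ^ n := by
  rcases Nat.even_or_odd m with hm | hm
  · rw [hm.neg_one_pow, (h.mp hm).neg_one_pow]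
  · rw [hm.neg_one_pow, (Nat.not_even_iff_odd.mp (fun he => (Nat.not_even_iff_odd.mpr hm) (h.mpr he))).neg_one_pow]


lemma edge_parity (S : Finset V) {u w : V} (hne : u ≠ w) :
    Odd ((S.filter (· ∈ s(u,w))).card) ↔ ((∃ a ∈ s(u,w), a ∈ S) ∧ (∃ a ∈ s(u,w), a ∉ S)) := by
  have hfil : S.filter (fun v => v ∈ s(u,w)) = ({u, w} : Finset V).filter (· ∈ S) := by
    ext v
    simp only [Finset.mem_filter, Sym2.mem_iff, Finset.mem_insert, Finset.mem_singleton]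
    tauto
  rw [hfil]
  by_cases hu : u ∈ S <;> by_cases hw : w ∈ S <;>
    simp [Finset.filter_insert, Finset.filter_singleton, hu, hw, Sym2.mem_iff, hne,
      Finset.card_pair, Nat.odd_iff]

lemma edge_parity' (G : SimpleGraph V) [DecidableRel G.Adj] (S : Finset V) {e : Sym2 V}
    (he : e ∈ G.edgeFinset) :
    Odd ((S.filter (· ∈ e)).card) ↔ ((∃ a ∈ e, a ∈ S) ∧ (∃ a ∈ e, a ∉ S)) := by
  induction e using Sym2.ind with
  | _ u w =>
    refine edge_parity S fun h => ?_
    exact G.irrefl (h ▸ SimpleGraph.mem_edgeFinset.mp he)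

lemma parity_key (G : SimpleGraph V) [DecidableRel G.Adj] {A : Finset (Sym2 V)}
    (hA : A ⊆ G.edgeFinset) (S : Finset V) :
    (-1 : ℝ) ^ (((univ : Finset V).filter fun v => Odd (A.filter fun e => v ∈ e).card) ∩ S).card
      = (-1) ^ (cutEdges G S ∩ A).card := by
  have h1 : ((univ : Finset V).filter fun v => Odd (A.filter fun e => v ∈ e).card) ∩ S
      = S.filter fun v => Odd (A.filter fun e => v ∈ e).card := by
    rw [Finset.inter_comm, Finset.inter_filter, Finset.inter_univ]
  have h2 : cutEdges G S ∩ A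
      = A.filter fun e => (∃ a ∈ e, a ∈ S) ∧ (∃ a ∈ e, a ∉ S) := by
    rw [cutEdges, Finset.inter_comm, Finset.inter_filter, Finset.inter_eq_left.mpr hA]
  rw [h1, h2]
  refine neg_one_pow_congr' ?_
  rw [← Finset.even_sum_iff_even_card_odd (fun v => (A.filter fun e => v ∈ e).card)]
  have hdc : (∑ v ∈ S, (A.filter fun e => v ∈ e).card)
      = ∑ e ∈ A, (S.filter (· ∈ e)).card := by
    simp_rw [Finset.card_filter]
    exact Finset.sum_comm
  rw [hdc, Finset.even_sum_iff_even_card_odd]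
  have : A.filter (fun e => Odd ((S.filter (· ∈ e)).card))
      = A.filter fun e => (∃ a ∈ e, a ∈ S) ∧ (∃ a ∈ e, a ∉ S) := by
    refine Finset.filter_congr fun e he => ?_
    exact iff_iff_eq.mp (edge_parity' G S (hA he)) ▸ Iff.rfl
  rw [this]


end Aux

/-- `2^{|E|} · Σ_{S ⊆ V} x^{|[S,S̄]|} y^{|S|}
  = Σ_{(T,A) T-join} (1−x)^{|A|} (1+x)^{|E|−|A|} (1−y)^{|T|} (1+y)^{|V|−|T|}`. -/
theorem cut_generating_function_eq_tjoin_sum (G : SimpleGraph V) [DecidableRel G.Adj]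
    (x y : ℝ) :
    2 ^ G.edgeFinset.card *
        ∑ S : Finset V, x ^ (cutEdges G S).card * y ^ S.card
      = ∑ p ∈ ((univ : Finset (Finset V)) ×ˢ G.edgeFinset.powerset).filter
            (fun p => IsTJoin G p.1 p.2),
          (1 - x) ^ p.2.card * (1 + x) ^ (G.edgeFinset.card - p.2.card) *
            (1 - y) ^ p.1.card * (1 + y) ^ (Fintype.card V - p.1.card) := by
  classical
  set E := G.edgeFinset with hE
  set TA : Finset (Sym2 V) → Finset V :=
    fun A => (univ : Finset V).filter fun v => Odd (A.filter fun e => v ∈ e).card with hTA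
  -- Step 1: reindex the sum over T-joins by the edge set A.
  have step1 :
      (∑ p ∈ ((univ : Finset (Finset V)) ×ˢ E.powerset).filter (fun p => IsTJoin G p.1 p.2),
          (1 - x) ^ p.2.card * (1 + x) ^ (E.card - p.2.card) *
            (1 - y) ^ p.1.card * (1 + y) ^ (Fintype.card V - p.1.card))
      = ∑ A ∈ E.powerset,
          (1 - x) ^ A.card * (1 + x) ^ (E.card - A.card) *
            (1 - y) ^ (TA A).card * (1 + y) ^ (Fintype.card V - (TA A).card) := by
    refine Finset.sum_nbij' (fun p => p.2) (fun A => (TA A, A)) ?_ ?_ ?_ ?_ ?_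
    · intro p hp
      exact (Finset.mem_product.mp (Finset.mem_filter.mp hp).1).2
    · intro A hA
      refine Finset.mem_filter.mpr ⟨Finset.mem_product.mpr ⟨Finset.mem_univ _, hA⟩, ?_⟩
      exact ⟨Finset.mem_powerset.mp hA, fun v => by simp [hTA]⟩
    · intro p hp
      obtain ⟨T, A⟩ := p
      have h := (Finset.mem_filter.mp hp).2
      have hT : TA A = T := by
        ext v
        simp [hTA, (h.2 v)]
      show (TA A, A) = (T, A)
      rw [hT]
    · intro A hA
      rfl
    · intro p hp
      obtain ⟨T, A⟩ := p
      have h := (Finset.mem_filter.mp hp).2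
      have hT : TA A = T := by
        ext v
        simp [hTA, (h.2 v)]
      show _ = (1 - x) ^ A.card * (1 + x) ^ (E.card - A.card) *
            (1 - y) ^ (TA A).card * (1 + y) ^ (Fintype.card V - (TA A).card)
      rw [hT]
  rw [step1]
  -- Step 2: expand each summand.
  have step2 : ∀ A ∈ E.powerset,
      (1 - x) ^ A.card * (1 + x) ^ (E.card - A.card) *
          (1 - y) ^ (TA A).card * (1 + y) ^ (Fintype.card V - (TA A).card)
      = ∑ B ∈ E.powerset, ∑ S ∈ (univ : Finset V).powerset,
          ((-1) ^ (B ∩ A).card * x ^ B.card) *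
            ((-1) ^ (cutEdges G S ∩ A).card * y ^ S.card) := by
    intro A hA
    have hAE : A ⊆ E := Finset.mem_powerset.mp hA
    have e1 := expand_lemma E A hAE x
    have e2 := expand_lemma (univ : Finset V) (TA A) (Finset.subset_univ _) y
    rw [Finset.card_univ] at e2
    calc (1 - x) ^ A.card * (1 + x) ^ (E.card - A.card) *
          (1 - y) ^ (TA A).card * (1 + y) ^ (Fintype.card V - (TA A).card)
        = ((1 - x) ^ A.card * (1 + x) ^ (E.card - A.card)) *
          ((1 - y) ^ (TA A).card * (1 + y) ^ (Fintype.card V - (TA A).card)) := by ring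
      _ = (∑ B ∈ E.powerset, (-1 : ℝ) ^ (A ∩ B).card * x ^ B.card) *
          (∑ S ∈ (univ : Finset V).powerset, (-1 : ℝ) ^ (TA A ∩ S).card * y ^ S.card) := by
          rw [e1, e2]
      _ = ∑ B ∈ E.powerset, ∑ S ∈ (univ : Finset V).powerset,
            ((-1 : ℝ) ^ (A ∩ B).card * x ^ B.card) *
              ((-1 : ℝ) ^ (TA A ∩ S).card * y ^ S.card) := by
          rw [Finset.sum_mul_sum]
      _ = _ := by
          refine Finset.sum_congr rfl fun B hB => Finset.sum_congr rfl fun S hS => ?_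
          rw [Finset.inter_comm A B, parity_key G hAE S]
  rw [Finset.sum_congr rfl step2]
  -- Step 3: swap sums and evaluate the character sum over A.
  rw [Finset.sum_comm]
  have step3 : ∀ B ∈ E.powerset,
      (∑ A ∈ E.powerset, ∑ S ∈ (univ : Finset V).powerset,
          ((-1 : ℝ) ^ (B ∩ A).card * x ^ B.card) *
            ((-1) ^ (cutEdges G S ∩ A).card * y ^ S.card))
      = ∑ S ∈ (univ : Finset V).powerset,
          x ^ B.card * y ^ S.card *
            (if B = cutEdges G S then (2 : ℝ) ^ E.card else 0) := by
    intro B hB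
    rw [Finset.sum_comm]
    refine Finset.sum_congr rfl fun S hS => ?_
    have hcut : cutEdges G S ⊆ E := Finset.filter_subset _ _
    have hc := charsum E B (cutEdges G S) (Finset.mem_powerset.mp hB) hcut
    calc (∑ A ∈ E.powerset,
            ((-1 : ℝ) ^ (B ∩ A).card * x ^ B.card) *
              ((-1) ^ (cutEdges G S ∩ A).card * y ^ S.card))
        = x ^ B.card * y ^ S.card *
            ∑ A ∈ E.powerset, (-1 : ℝ) ^ (B ∩ A).card * (-1) ^ (cutEdges G S ∩ A).card := by
          rw [Finset.mul_sum]
          refine Finset.sum_congr rfl fun A hA => by ring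
      _ = _ := by rw [hc]
  rw [Finset.sum_congr rfl step3]
  -- Step 4: collapse the sum over B.
  rw [Finset.sum_comm]
  have step4 : ∀ S ∈ (univ : Finset V).powerset,
      (∑ B ∈ E.powerset,
          x ^ B.card * y ^ S.card * (if B = cutEdges G S then (2 : ℝ) ^ E.card else 0))
      = 2 ^ E.card * (x ^ (cutEdges G S).card * y ^ S.card) := by
    intro S hS
    have hcut : cutEdges G S ∈ E.powerset :=
      Finset.mem_powerset.mpr (Finset.filter_subset _ _)
    rw [Finset.sum_congr rfl (fun B (hB : B ∈ E.powerset) => ?_),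
      Finset.sum_ite_eq' E.powerset (cutEdges G S)
        (fun B => x ^ B.card * y ^ S.card * (2 : ℝ) ^ E.card), if_pos hcut]
    · ring
    · rw [mul_ite, mul_zero]
  rw [Finset.sum_congr rfl step4, ← Finset.mul_sum, Finset.powerset_univ]
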